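/- For any pair (a, x) of coprime integers with 1 ≤ a ≤ x, deg (a, x)_q = deg (x, a)_q. -/

import Mathlib

open Polynomial

/-- The `q`-integer `[c]_q = 1 + q + ⋯ + q^{c-1}` as a polynomial in `ℤ[q]`. -/
noncomputable def qInt (c : ℕ) : Polynomial ℤ := ∑ i ∈ Finset.range c, X ^ i

/-- The polynomial `(a, b)_q ∈ ℤ[q]` associated to a pair of coprime positive
integers: `(1, n)_q = (n, 1)_q = [n+1]_q`; if `a < b` then
`(a,b)_q = (a-r, r)_q + q·(a, b-a)_q` with `r = b % a`; if `a > b` then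
`(a,b)_q = (a-b, b)_q + q^⌈a/b⌉·(r, b-r)_q` with `r = a % b`.
(Values on non-coprime or zero inputs are junk.) -/
noncomputable def W : ℕ → ℕ → Polynomial ℤ
  | 1, b => qInt (b + 1)
  | a, 1 => qInt (a + 1)
  | 0, _ => 0
  | _, 0 => 0
  | a + 2, b + 2 =>
    if a < b then
      W (a + 2 - (b + 2) % (a + 2)) ((b + 2) % (a + 2)) + X * W (a + 2) (b - a)
    else
      W (a - b) (b + 2) +
        X ^ ((a + 2 + (b + 2) - 1) / (b + 2)) *
          W ((a + 2) % (b + 2)) (b + 2 - (a + 2) % (b + 2))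
  termination_by a b => a + b
  decreasing_by
  · have := Nat.mod_lt (b + 2) (show 0 < a + 2 by omega); omega
  · omega
  · omega
  · have := Nat.mod_lt (a + 2) (show 0 < b + 2 by omega); omega

/-- The sequence of digits of the negative continued fraction expansion
`x/a = [c₁, …, c_l]⁻` (each `cᵢ = ⌈·⌉` of the current fraction). By convention
`ncfDigits x 0 = []` (for `1/0 = ∞`) and `ncfDigits x 1 = [x]`. -/
def ncfDigits : ℕ → ℕ → List ℕ
  | _, 0 => []
  | x, 1 => [x]
  | x, a + 2 =>
      (x + (a + 2) - 1) / (a + 2) ::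
        ncfDigits (a + 2) ((x + (a + 2) - 1) / (a + 2) * (a + 2) - x)
  termination_by x a => a
  decreasing_by
    have := Nat.div_mul_le_self (x + (a + 2) - 1) (a + 2); omega

/-- The (coprime) numerator and denominator of the Morier-Genoud–Ovsienko
`q`-deformation of the negative continued fraction `[c₁, …, c_l]⁻`, computed by
the continuant recursion `(N, D) ↦ ([c]_q·N - q^{c-1}·D, N)`, with `(1, 0)` for
the empty list. -/
noncomputable def qCF : List ℕ → Polynomial ℤ × Polynomial ℤ
  | [] => (1, 0)
  | c :: rest =>
      let p := qCF rest
      (qInt c * p.1 - X ^ (c - 1) * p.2, p.1)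

/-- Numerator `N_q(x/a)` of the Morier-Genoud–Ovsienko `q`-rational `[x/a]_q`. -/
noncomputable def Nq (x a : ℕ) : Polynomial ℤ := (qCF (ncfDigits x a)).1

/-- Denominator `D_q(x/a)` of the Morier-Genoud–Ovsienko `q`-rational `[x/a]_q`. -/
noncomputable def Dq (x a : ℕ) : Polynomial ℤ := (qCF (ncfDigits x a)).2

/-- The normalized Jones polynomial `J_{x/a}(q) = q·N_q(x/a) + (1-q)·D_q(x/a)`. -/
noncomputable def Jq (x a : ℕ) : Polynomial ℤ := X * Nq x a + (1 - X) * Dq x a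


/-! ### Auxiliary development -/

/-- Sum of the regular continued fraction quotients of `b / a`. -/
def gq : ℕ → ℕ → ℕ
  | 0, _ => 0
  | a + 1, b => b / (a + 1) + gq (b % (a + 1)) (a + 1)
  termination_by a _ => a
  decreasing_by exact Nat.mod_lt _ (Nat.succ_pos a)

lemma gq_add_self (u v : ℕ) (hu : 1 ≤ u) : gq u (v + u) = gq u v + 1 := by
  obtain ⟨u', rfl⟩ : ∃ u', u = u' + 1 := ⟨u - 1, by omega⟩
  simp [gq, Nat.add_div_right, Nat.add_mod_right]
  omega

lemma gq_swap (a b : ℕ) (h : a < b) : gq b a = gq a b := by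
  obtain ⟨b', rfl⟩ : ∃ b', b = b' + 1 := ⟨b - 1, by omega⟩
  rw [gq, Nat.div_eq_of_lt h, Nat.mod_eq_of_lt h, Nat.zero_add]

lemma gq_comm (a b : ℕ) : gq a b = gq b a := by
  rcases lt_trichotomy a b with h | rfl | h
  · exact (gq_swap a b h).symm
  · rfl
  · exact gq_swap b a h

lemma gq_one (b : ℕ) : gq 1 b = b := by
  rw [gq, Nat.mod_one, Nat.div_one, gq]
  omega

lemma gq_unfold (a b : ℕ) (ha : 1 ≤ a) : gq a b = b / a + gq (b % a) a := by
  obtain ⟨a', rfl⟩ : ∃ a', a = a' + 1 := ⟨a - 1, by omega⟩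
  rw [gq]

lemma qInt_coeff (c n : ℕ) : (qInt c).coeff n = if n < c then 1 else 0 := by
  simp [qInt, Polynomial.coeff_X_pow, Finset.sum_ite_eq]

lemma qInt_natDegree (c : ℕ) : (qInt (c + 1)).natDegree = c := by
  apply le_antisymm
  · rw [Polynomial.natDegree_le_iff_coeff_eq_zero]
    intro n hn
    rw [qInt_coeff, if_neg (by omega)]
  · apply Polynomial.le_natDegree_of_ne_zero
    rw [qInt_coeff, if_pos (by omega)]
    exact one_ne_zero

lemma qInt_monic (c : ℕ) : (qInt (c + 1)).Monic :=
  Polynomial.monic_geom_sum_X (Nat.succ_ne_zero c)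

lemma W_eq_unary (a b : ℕ) : W a b = W._unary ⟨a, b⟩ := by with_unfolding_all rfl

lemma W_one (b : ℕ) : W 1 b = qInt (b + 1) := by
  match b with
  | 0 => rw [W_eq_unary]; unfold W._unary; with_unfolding_all rfl
  | 1 => rw [W_eq_unary]; unfold W._unary; with_unfolding_all rfl
  | (n + 2) =>
    rw [W_eq_unary]; unfold W._unary; with_unfolding_all rfl

lemma W_one_right (a : ℕ) : W (a + 2) 1 = qInt (a + 2 + 1) := by
  rw [W_eq_unary]; unfold W._unary; with_unfolding_all rfl

lemma W_main (a b : ℕ) : W (a + 2) (b + 2) =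
    if a < b then
      W (a + 2 - (b + 2) % (a + 2)) ((b + 2) % (a + 2)) + X * W (a + 2) (b - a)
    else
      W (a - b) (b + 2) +
        X ^ ((a + 2 + (b + 2) - 1) / (b + 2)) *
          W ((a + 2) % (b + 2)) (b + 2 - (a + 2) % (b + 2)) := by
  rw [W_eq_unary]; unfold W._unary; with_unfolding_all rfl

lemma monic_add_right {p q : Polynomial ℤ} (hq : q.Monic) (h : p.natDegree < q.natDegree) :
    (p + q).Monic ∧ (p + q).natDegree = q.natDegree := by
  have hd : p.degree < q.degree := by
    refine lt_of_le_of_lt Polynomial.degree_le_natDegree ?_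
    rw [Polynomial.degree_eq_natDegree hq.ne_zero]
    exact_mod_cast h
  exact ⟨hq.add_of_right hd, Polynomial.natDegree_add_eq_right_of_natDegree_lt h⟩

lemma W_spec : ∀ (n a b : ℕ), a + b ≤ n → Nat.Coprime a b → 1 ≤ a → 1 ≤ b →
    (W a b).Monic ∧ (W a b).natDegree = gq a b := by
  intro n
  induction n with
  | zero => intro a b h _ ha hb; omega
  | succ n ih =>
    intro a b hn hco ha hb
    by_cases ha1 : a = 1
    · subst ha1
      exact ⟨by rw [W_one]; exact qInt_monic b, by rw [W_one, qInt_natDegree, gq_one]⟩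
    by_cases hb1 : b = 1
    · subst hb1
      obtain ⟨a', rfl⟩ : ∃ a', a = a' + 2 := ⟨a - 2, by omega⟩
      refine ⟨W_one_right a' ▸ qInt_monic (a' + 2), ?_⟩
      rw [W_one_right, qInt_natDegree, gq_unfold _ _ (by omega),
        Nat.div_eq_of_lt (by omega), Nat.mod_eq_of_lt (by omega), gq_one]
      omega
    obtain ⟨a', rfl⟩ : ∃ a', a = a' + 2 := ⟨a - 2, by omega⟩
    obtain ⟨b', rfl⟩ : ∃ b', b = b' + 2 := ⟨b - 2, by omega⟩
    have hne : a' ≠ b' := by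
      rintro rfl
      have : a' + 2 = 1 := by simpa [Nat.Coprime] using hco
      omega
    rw [W_main]
    by_cases hlt : a' < b'
    · rw [if_pos hlt]
      set r := (b' + 2) % (a' + 2) with hr
      have hrA : r < a' + 2 := Nat.mod_lt _ (by omega)
      have hr1 : 1 ≤ r := by
        rcases Nat.eq_zero_or_pos r with h0 | h; swap; · exact h
        have hd : (a' + 2) ∣ (b' + 2) := Nat.dvd_of_mod_eq_zero (hr ▸ h0)
        have := Nat.Coprime.eq_one_of_dvd hco hd
        omega
      have hco1 : Nat.Coprime r (a' + 2) := by
        rw [hr, Nat.Coprime, ← Nat.gcd_rec]; exact hco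
      have hco2 : Nat.Coprime (a' + 2 - r) r := by
        rw [Nat.Coprime, Nat.gcd_sub_self_left (le_of_lt hrA)]
        exact Nat.coprime_comm.mp hco1
      have hco3 : Nat.Coprime (a' + 2) (b' - a') := by
        have h1 : b' - a' = (b' + 2) - (a' + 2) := by omega
        rw [h1, Nat.Coprime, Nat.gcd_sub_self_right (by omega)]
        exact hco
      have h1 := ih (a' + 2 - r) r (by omega) hco2 (by omega) hr1
      have h2 := ih (a' + 2) (b' - a') (by omega) hco3 (by omega) (by omega)
      have d2 : (X * W (a' + 2) (b' - a')).natDegree = gq (a' + 2) (b' - a') + 1 := by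
        rw [Polynomial.natDegree_mul Polynomial.X_ne_zero h2.1.ne_zero,
          Polynomial.natDegree_X, h2.2]
        omega
      have m2 : (X * W (a' + 2) (b' - a')).Monic := Polynomial.monic_X.mul h2.1
      have e2 : gq (a' + 2) (b' + 2) = gq (a' + 2) (b' - a') + 1 := by
        rw [show b' + 2 = (b' - a') + (a' + 2) by omega, gq_add_self _ _ (by omega)]
      have e1 : gq (a' + 2) (b' + 2) = (b' + 2) / (a' + 2) + (gq (a' + 2 - r) r + 1) := by
        rw [gq_unfold _ _ (by omega), ← hr]
        congr 1
        conv_lhs => rw [show (a' + 2 : ℕ) = (a' + 2 - r) + r by omega]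
        rw [gq_add_self _ _ hr1, gq_comm r (a' + 2 - r)]
      have hdiv : 1 ≤ (b' + 2) / (a' + 2) := (Nat.one_le_div_iff (by omega)).mpr (by omega)
      have key := monic_add_right m2 (by rw [h1.2, d2]; omega)
      exact ⟨key.1, by rw [key.2, d2]; omega⟩
    · rw [if_neg hlt]
      have hblt : b' < a' := by omega
      set r := (a' + 2) % (b' + 2) with hr
      have hrB : r < b' + 2 := Nat.mod_lt _ (by omega)
      have hr1 : 1 ≤ r := by
        rcases Nat.eq_zero_or_pos r with h0 | h; swap; · exact h
        have hd : (b' + 2) ∣ (a' + 2) := Nat.dvd_of_mod_eq_zero (hr ▸ h0)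
        have := Nat.Coprime.eq_one_of_dvd hco.symm hd
        omega
      have hc : (a' + 2 + (b' + 2) - 1) / (b' + 2) = (a' + 2) / (b' + 2) + 1 := by
        have hmod := Nat.div_add_mod (a' + 2) (b' + 2)
        rw [show a' + 2 + (b' + 2) - 1 = (r + (b' + 2) - 1) + (b' + 2) * ((a' + 2) / (b' + 2))
            by omega,
          Nat.add_mul_div_left _ _ (show 0 < b' + 2 by omega),
          Nat.div_eq_of_lt_le (k := 1) (by omega) (by omega)]
        omega
      have hco1 : Nat.Coprime r (b' + 2) := by
        rw [hr, Nat.Coprime, ← Nat.gcd_rec]; exact hco.symm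
      have hco2 : Nat.Coprime r (b' + 2 - r) := by
        rw [Nat.Coprime, Nat.gcd_sub_self_right (le_of_lt hrB)]
        exact hco1
      have hco3 : Nat.Coprime (a' - b') (b' + 2) := by
        have h1 : a' - b' = (a' + 2) - (b' + 2) := by omega
        rw [h1, Nat.Coprime, Nat.gcd_sub_self_left (by omega)]
        exact hco
      have h1 := ih (a' - b') (b' + 2) (by omega) hco3 (by omega) (by omega)
      have h2 := ih r (b' + 2 - r) (by omega) hco2 hr1 (by omega)
      have d2 : (X ^ ((a' + 2 + (b' + 2) - 1) / (b' + 2)) *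
          W r (b' + 2 - r)).natDegree
          = (a' + 2) / (b' + 2) + 1 + gq r (b' + 2 - r) := by
        rw [Polynomial.natDegree_mul (pow_ne_zero _ Polynomial.X_ne_zero) h2.1.ne_zero,
          Polynomial.natDegree_X_pow, h2.2, hc]
      have m2 : (X ^ ((a' + 2 + (b' + 2) - 1) / (b' + 2)) * W r (b' + 2 - r)).Monic :=
        (Polynomial.monic_X_pow _).mul h2.1
      have gc : gq (a' + 2) (b' + 2) = gq (b' + 2) (a' + 2) := gq_comm _ _
      have e1 : gq (b' + 2) (a' + 2) = (a' + 2) / (b' + 2) + (gq r (b' + 2 - r) + 1) := by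
        rw [gq_unfold _ _ (by omega), ← hr]
        congr 1
        conv_lhs => rw [show (b' + 2 : ℕ) = (b' + 2 - r) + r by omega]
        rw [gq_add_self _ _ hr1]
      have e3 : gq (b' + 2) (a' + 2) = gq (a' - b') (b' + 2) + 1 := by
        conv_lhs => rw [show a' + 2 = (a' - b') + (b' + 2) by omega]
        rw [gq_add_self _ _ (by omega), gq_comm (b' + 2) (a' - b')]
      have hdiv : 1 ≤ (a' + 2) / (b' + 2) := (Nat.one_le_div_iff (by omega)).mpr (by omega)
      have key := monic_add_right m2 (by rw [h1.2, d2]; omega)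
      exact ⟨key.1, by rw [key.2, d2]; omega⟩

/-- For coprime `1 ≤ a ≤ x`: `deg (a, x)_q = deg (x, a)_q`. -/
theorem W_natDegree_symm (a x : ℕ) (hco : Nat.Coprime a x) (ha : 1 ≤ a) (hax : a ≤ x) :
    (W a x).natDegree = (W x a).natDegree := by
  have h1 := W_spec (a + x) a x le_rfl hco ha (le_trans ha hax)
  have h2 := W_spec (x + a) x a le_rfl hco.symm (le_trans ha hax) ha
  rw [h1.2, h2.2, gq_comm]
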